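/- Fix a real η > 1 and integers m ≥ 1 and j₀ ≥ 1, let p_i denote the i-th prime, and for j ∈ ℕ≥1 set r_j := √(m + ∏_{j₀ ≤ i ≤ 2^{j^η}} p_i) and R := {r_j : j ∈ ℕ≥1}. Then R is lacunary, and there exist sets of primes G and B (not necessarily disjoint) with G ∪ B = all primes such that: (G1) for each prime p ∈ G and each j, the residue r_j² mod p is a unit of ℤ/pℤ; (G2) for every ε > 0 there is C_ε (independent of p) such that #{r_j² mod p : j ∈ ℕ≥1} ≤ C_ε·p^ε for all p ∈ G; and (B) ∑_{p ∈ B} p^{−1} < ∞. -/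

import Mathlib

open scoped ENNReal NNReal BigOperators
open MeasureTheory

noncomputable section

/-- `e(t) = exp(2πit)`. -/
def eC (t : ℝ) : ℂ := Complex.exp (2 * Real.pi * Complex.I * t)

/-- `|x|²` for `x ∈ ℤ^d`. -/
def normSqZ {d : ℕ} (x : Fin d → ℤ) : ℤ := ∑ i, (x i) ^ 2

/-- The natural number `r²` of an admissible radius `r`. -/
def radSq (r : ℝ) : ℕ := ⌊r ^ 2⌋₊

/-- `r` is an admissible radius: `r > 0` and `r² ∈ ℕ`. -/
def IsAdmissible (r : ℝ) : Prop := 0 < r ∧ ∃ n : ℕ, r ^ 2 = (n : ℝ)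

/-- A set of positive reals is lacunary. -/
def Lacunary (R : Set ℝ) : Prop := ∃ c : ℝ, 1 < c ∧ ∀ r ∈ R, ∀ s ∈ R, r < s → c * r ≤ s

/-- `N_d(r)`: the number of lattice points on the sphere of radius `r` in `ℤ^d`. -/
def sphereCount (d : ℕ) (r : ℝ) : ℕ := Nat.card {x : Fin d → ℤ // normSqZ x = (radSq r : ℤ)}

/-- The discrete spherical average `A_r f`. -/
def sphAvg (d : ℕ) (r : ℝ) (f : (Fin d → ℤ) → ℂ) (x : Fin d → ℤ) : ℂ :=
  (sphereCount d r : ℂ)⁻¹ *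
    ∑' y : Fin d → ℤ, if normSqZ y = (radSq r : ℤ) then f (x - y) else 0

/-- The `ℓ^p(ℤ^d)` norm, valued in `ℝ≥0∞`. -/
def lpNorm (d : ℕ) (p : ℝ) (f : (Fin d → ℤ) → ℂ) : ℝ≥0∞ :=
  (∑' x : Fin d → ℤ, (‖f x‖₊ : ℝ≥0∞) ^ p) ^ (1 / p)

/-- `(G, B)` is an admissible good/bad prime dichotomy for the set of radii `R`,
with parameter `s`. -/
def GoodBadDichotomy (R : Set ℝ) (G B : Set ℕ) (s : ℝ) : Prop :=
  (∀ p : ℕ, p.Prime → p ∈ G ∪ B) ∧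
  (∀ p ∈ G, Nat.Prime p) ∧
  (∀ p ∈ B, Nat.Prime p) ∧
  (∀ p ∈ G, ∀ r ∈ R, IsUnit ((radSq r : ZMod p))) ∧
  (∀ ε : ℝ, 0 < ε → ∃ C : ℝ, 0 < C ∧ ∀ p ∈ G,
    (({z : ZMod p | ∃ r ∈ R, z = (radSq r : ZMod p)}.ncard : ℝ)) ≤ C * (p : ℝ) ^ ε) ∧
  Summable (fun q : B => (q : ℝ) ^ (-s))

/-- `∏_{i ≤ T} p_i`, the product of the first `⌊T⌋` primes. -/
def primorialUpTo (T : ℝ) : ℕ := ∏ i ∈ Finset.range ⌊T⌋₊, Nat.nth Nat.Prime i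

/-- `∏_{j₀ ≤ i ≤ T} p_i` where `p_i` is the `i`-th prime (`1`-indexed). -/
def prodPrimesFrom (j₀ : ℕ) (T : ℝ) : ℕ :=
  ∏ i ∈ Finset.Icc j₀ ⌊T⌋₊, Nat.nth Nat.Prime (i - 1)

/-- `n_j = 1 + ∏_{i ≤ 2^{j^η}} p_i`. -/
def nseq (η : ℝ) (j : ℕ) : ℕ := 1 + primorialUpTo ((2 : ℝ) ^ ((j : ℝ) ^ η))

/-- The normalized Kloosterman sum `K(q, N; n)`. -/
def kloosterman (d q : ℕ) (N : ℤ) (n : Fin d → ℤ) : ℂ :=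
  ((q : ℂ)⁻¹) ^ d *
    ∑ u : Fin q,
      if Nat.Coprime (u : ℕ) q then
        eC (-(((u : ℕ) : ℝ) * (N : ℝ)) / q) *
          ∑ b : Fin d → Fin q,
            eC ((((u : ℕ) : ℝ) * ∑ i, (((b i : ℕ) : ℝ)) ^ 2
                + ∑ i, ((b i : ℕ) : ℝ) * ((n i : ℝ))) / q)
      else 0

/-- The Ramanujan sum `c_q(N)`. -/
def ramanujanSum (q : ℕ) (N : ℤ) : ℂ :=
  ∑ u : Fin q, if Nat.Coprime (u : ℕ) q then eC ((((u : ℕ) : ℝ) * (N : ℝ)) / q) else 0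

/-- The measure `dσ_r = (2 r^{d-1})⁻¹ ℋ^{d-1} ⌞ {|x| = r}` on `ℝ^d`. -/
def sphMeasure (d : ℕ) (r : ℝ) : Measure (EuclideanSpace ℝ (Fin d)) :=
  (ENNReal.ofReal (2 * r ^ (d - 1)))⁻¹ •
    (μH[((d : ℝ) - 1)] : Measure (EuclideanSpace ℝ (Fin d))).restrict (Metric.sphere 0 r)

/-- The Fourier transform `𝓕dσ_r(ξ) = ∫ e(x·ξ) dσ_r(x)`. -/
def fourierSphMeasure (d : ℕ) (r : ℝ) (ξ : Fin d → ℝ) : ℂ :=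
  ∫ x : EuclideanSpace ℝ (Fin d), eC (∑ i, x i * ξ i) ∂(sphMeasure d r)

/-- `Ψ` is a smooth bump: supported in `[-1/4,1/4]^d` and `1` on `[-1/8,1/8]^d`. -/
def IsBump (d : ℕ) (Ψ : (Fin d → ℝ) → ℝ) : Prop :=
  ContDiff ℝ (⊤ : ℕ∞) Ψ ∧
  (∀ x, x ∉ Set.Icc (fun _ => -(1/4 : ℝ)) (fun _ => (1/4 : ℝ)) → Ψ x = 0) ∧
  (∀ x ∈ Set.Icc (fun _ => -(1/8 : ℝ)) (fun _ => (1/8 : ℝ)), Ψ x = 1)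

/-- `Ψ'` is a smooth cutoff with `1_{[-1/4,1/4]^d} ≤ Ψ' ≤ 1_{[-1/2,1/2]^d}`. -/
def IsCutoff (d : ℕ) (Ψ' : (Fin d → ℝ) → ℝ) : Prop :=
  ContDiff ℝ (⊤ : ℕ∞) Ψ' ∧
  (∀ x, Set.indicator (Set.Icc (fun _ => -(1/4 : ℝ)) (fun _ => (1/4 : ℝ)))
      (fun _ => (1 : ℝ)) x ≤ Ψ' x) ∧
  (∀ x, Ψ' x ≤ Set.indicator (Set.Icc (fun _ => -(1/2 : ℝ)) (fun _ => (1/2 : ℝ)))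
      (fun _ => (1 : ℝ)) x)

/-- The Fourier transform of `f : ℤ^d → ℂ`, `f̂(ξ) = ∑_n f(n) e(n·ξ)`. -/
def ftZ {d : ℕ} (f : (Fin d → ℤ) → ℂ) (ξ : Fin d → ℝ) : ℂ :=
  ∑' n : Fin d → ℤ, f n * eC (∑ i, (n i : ℝ) * ξ i)

/-- The Fourier multiplier operator on `ℤ^d` with 1-periodic multiplier `m`. -/
def mulOp (d : ℕ) (m : (Fin d → ℝ) → ℂ) (f : (Fin d → ℤ) → ℂ) (x : Fin d → ℤ) : ℂ :=
  ∫ ξ in Set.Icc (0 : Fin d → ℝ) 1, m ξ * ftZ f ξ * eC (-∑ i, (x i : ℝ) * ξ i)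

/-- The multiplier of `H^q_r`. -/
def mHqr (d q : ℕ) (r : ℝ) (Ψ : (Fin d → ℝ) → ℝ) (ξ : Fin d → ℝ) : ℂ :=
  ∑' n : Fin d → ℤ,
    kloosterman d q ((radSq r : ℤ)) n * ((Ψ (fun i => (q : ℝ) * ξ i - (n i : ℝ)) : ℝ) : ℂ) *
      fourierSphMeasure d r (fun i => ξ i - (n i : ℝ) / q)

/-- The multiplier of `U^{1,q}_r` for `q = q₁q₂`. -/
def mU1 (d q₁ q₂ : ℕ) (r : ℝ) (Ψ' : (Fin d → ℝ) → ℝ) (ξ : Fin d → ℝ) : ℂ :=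
  ∑' n : Fin d → ℤ,
    kloosterman d q₁ ((radSq r : ℤ)) n *
      ((Ψ' (fun i => ((q₁ * q₂ : ℕ) : ℝ) * ξ i - (n i : ℝ)) : ℝ) : ℂ)

/-- The `ℓ^p(ℤ^d) → ℓ^p(ℤ^d)` operator norm (as a supremum over finitely supported
functions in the unit ball). -/
def opNormLp (d : ℕ) (p : ℝ) (T : ((Fin d → ℤ) → ℂ) → ((Fin d → ℤ) → ℂ)) : ℝ≥0∞ :=
  ⨆ f : {f : (Fin d → ℤ) → ℂ // (Function.support f).Finite ∧ lpNorm d p f ≤ 1},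
    lpNorm d p (T f.1)

/-- `𝓕Ψ_q(ζ) = ∫_{ℝ^d} Ψ(qy) e(y·ζ) dy`. -/
def ftPsiQ (d q : ℕ) (Ψ : (Fin d → ℝ) → ℝ) (ζ : Fin d → ℝ) : ℂ :=
  ∫ y : Fin d → ℝ, ((Ψ (fun i => (q : ℝ) * y i) : ℝ) : ℂ) * eC (∑ i, y i * ζ i)

/-- The kernel `K^q_r(x) = c_q(r² - |x|²) · ((𝓕Ψ_q) * dσ_r)(x)`. -/
def kernelK (d q : ℕ) (r : ℝ) (Ψ : (Fin d → ℝ) → ℝ) (x : Fin d → ℤ) : ℂ :=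
  ramanujanSum q ((radSq r : ℤ) - normSqZ x) *
    ∫ y : EuclideanSpace ℝ (Fin d), ftPsiQ d q Ψ (fun i => ((x i : ℝ)) - y i) ∂(sphMeasure d r)

/-- Discrete convolution on `ℤ^d`. -/
def dconv {d : ℕ} (f g : (Fin d → ℤ) → ℂ) (x : Fin d → ℤ) : ℂ :=
  ∑' y : Fin d → ℤ, f y * g (x - y)

/-- `Ã_r f = f * σ_r` with `σ_r = r^{2-d} 1_{sphere}`. -/
def tildeAvg (d : ℕ) (r : ℝ) (f : (Fin d → ℤ) → ℂ) (x : Fin d → ℤ) : ℂ :=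
  (r : ℂ) ^ ((2 : ℤ) - (d : ℤ)) *
    ∑' y : Fin d → ℤ, if normSqZ y = (radSq r : ℤ) then f (x - y) else 0

/-- The error operator `E_r f = Ã_r f - ∑_{1 ≤ q ≤ r} C^q_r f`. -/
def errOp (d : ℕ) (r : ℝ) (Ψ : (Fin d → ℝ) → ℝ) (f : (Fin d → ℤ) → ℂ) (x : Fin d → ℤ) : ℂ :=
  tildeAvg d r f x - ∑ q ∈ Finset.Icc 1 ⌊r⌋₊, dconv f (kernelK d q r Ψ) x

/-- The Euclidean norm `|x|` of `x ∈ ℤ^d`. -/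
def euclNormZ {d : ℕ} (x : Fin d → ℤ) : ℝ := Real.sqrt (∑ i, ((x i : ℝ)) ^ 2)


namespace St3

lemma prime_nth (k : ℕ) : Nat.Prime (Nat.nth Nat.Prime k) :=
  Nat.nth_mem_of_infinite Nat.infinite_setOf_prime k

lemma nth_ge (k : ℕ) : k + 2 ≤ Nat.nth Nat.Prime k := by
  induction k with
  | zero => simp
  | succ n ih =>
    have h := (Nat.nth_lt_nth (p := Nat.Prime) Nat.infinite_setOf_prime).mpr (show n < n + 1 by omega)
    omega

lemma nth_le_nth_iff {a b : ℕ} :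
    Nat.nth Nat.Prime a ≤ Nat.nth Nat.Prime b ↔ a ≤ b :=
  Nat.nth_le_nth Nat.infinite_setOf_prime

variable (η : ℝ) (m j₀ : ℕ)

/-- `M_j = ⌊2^{j^η}⌋`. -/
def Mf (j : ℕ) : ℕ := ⌊(2:ℝ) ^ ((j:ℝ) ^ η)⌋₊

/-- the product `P_j`. -/
def Pf (j : ℕ) : ℕ := prodPrimesFrom j₀ ((2:ℝ) ^ ((j:ℝ) ^ η))

/-- `n_j = m + P_j`. -/
def nf (j : ℕ) : ℕ := m + Pf η j₀ j

/-- `p_{M_j}` (the largest prime in the product). -/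
def Pb (j : ℕ) : ℕ := Nat.nth Nat.Prime (Mf η j - 1)

/-- bad primes from level `j`. -/
def Sf (j : ℕ) : Finset ℕ := (nf η m j₀ j).primeFactors.filter (fun q => Pb η j < q)

lemma Pf_eq (j : ℕ) : Pf η j₀ j = ∏ i ∈ Finset.Icc j₀ (Mf η j), Nat.nth Nat.Prime (i - 1) := rfl

lemma Pf_pos (j : ℕ) : 0 < Pf η j₀ j := by
  rw [Pf_eq]; exact Finset.prod_pos fun i _ => (prime_nth (i-1)).pos

lemma nf_pos (hm : 1 ≤ m) (j : ℕ) : 0 < nf η m j₀ j := by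
  have := Pf_pos η j₀ j; unfold nf; omega

lemma Mf_ge (hη : 1 ≤ η) {j : ℕ} (hj : 1 ≤ j) : 2^j ≤ Mf η j := by
  apply Nat.le_floor
  have h1 : (1:ℝ) ≤ (j:ℝ) := by exact_mod_cast hj
  push_cast
  calc (2:ℝ)^(j:ℕ) = (2:ℝ)^((j:ℕ):ℝ) := (Real.rpow_natCast 2 j).symm
    _ ≤ (2:ℝ)^((j:ℝ)^η) := by
        apply Real.rpow_le_rpow_of_exponent_le one_le_two
        nth_rewrite 1 [← Real.rpow_one (j:ℝ)]
        exact Real.rpow_le_rpow_of_exponent_le h1 hη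

lemma Mf_lt (j : ℕ) : (2:ℝ) ^ ((j:ℝ) ^ η) < (Mf η j : ℝ) + 1 :=
  Nat.lt_floor_add_one _

lemma Mf_mono (hη : 0 ≤ η) {j j' : ℕ} (h : j ≤ j') : Mf η j ≤ Mf η j' := by
  apply Nat.floor_le_floor
  apply Real.rpow_le_rpow_of_exponent_le one_le_two
  exact Real.rpow_le_rpow (by positivity) (by exact_mod_cast h) hη

lemma Pf_dvd {j j' : ℕ} (h : Mf η j ≤ Mf η j') : Pf η j₀ j ∣ Pf η j₀ j' := by
  rw [Pf_eq, Pf_eq]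
  exact Finset.prod_dvd_prod_of_subset _ _ _ (Finset.Icc_subset_Icc_right h)

lemma prodIcc_le {M : ℕ} (hj₀ : 1 ≤ j₀) (hM : 1 ≤ M) :
    ∏ i ∈ Finset.Icc j₀ M, Nat.nth Nat.Prime (i - 1) ≤ 4 ^ Nat.nth Nat.Prime (M - 1) := by
  have hinj : ∀ x ∈ Finset.range M, ∀ y ∈ Finset.range M,
      Nat.nth Nat.Prime x = Nat.nth Nat.Prime y → x = y := fun x _ y _ h =>
    Nat.nth_injective Nat.infinite_setOf_prime h
  have h1 : ∏ i ∈ Finset.Icc j₀ M, Nat.nth Nat.Prime (i - 1)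
      ≤ ∏ k ∈ Finset.range M, Nat.nth Nat.Prime k := by
    have heq : ∏ i ∈ Finset.Icc j₀ M, Nat.nth Nat.Prime (i - 1)
        = ∏ k ∈ (Finset.Icc j₀ M).image (· - 1), Nat.nth Nat.Prime k := by
      rw [Finset.prod_image]
      intro a ha b hb hab
      simp only [Finset.mem_coe, Finset.mem_Icc] at ha hb hab
      omega
    rw [heq]
    apply Finset.prod_le_prod_of_subset_of_one_le'
    · intro k hk
      simp only [Finset.mem_image, Finset.mem_Icc, Finset.mem_range] at hk ⊢
      obtain ⟨i, ⟨hi1, hi2⟩, rfl⟩ := hk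
      omega
    · intro k _ _
      exact (prime_nth k).one_lt.le
  have himg : (Finset.range M).image (Nat.nth Nat.Prime)
      = Finset.filter (fun p => Nat.Prime p) (Finset.range (Nat.nth Nat.Prime (M-1) + 1)) := by
    ext q
    simp only [Finset.mem_image, Finset.mem_range, Finset.mem_filter, Nat.lt_succ_iff]
    constructor
    · rintro ⟨k, hk, rfl⟩
      exact ⟨nth_le_nth_iff.mpr (by omega), prime_nth k⟩
    · rintro ⟨hle, hq⟩
      refine ⟨Nat.count Nat.Prime q, ?_, Nat.nth_count hq⟩
      have h2 : Nat.nth Nat.Prime (Nat.count Nat.Prime q) ≤ Nat.nth Nat.Prime (M-1) := by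
        rw [Nat.nth_count hq]; exact hle
      have := nth_le_nth_iff.mp h2
      omega
  have h2 : ∏ k ∈ Finset.range M, Nat.nth Nat.Prime k
      = primorial (Nat.nth Nat.Prime (M-1)) := by
    calc ∏ k ∈ Finset.range M, Nat.nth Nat.Prime k
        = ∏ q ∈ (Finset.range M).image (Nat.nth Nat.Prime), q := by rw [Finset.prod_image hinj]
      _ = _ := by rw [himg]; rfl
  calc ∏ i ∈ Finset.Icc j₀ M, Nat.nth Nat.Prime (i - 1)
      ≤ ∏ k ∈ Finset.range M, Nat.nth Nat.Prime k := h1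
    _ = primorial (Nat.nth Nat.Prime (M-1)) := h2
    _ ≤ 4 ^ Nat.nth Nat.Prime (M-1) := primorial_le_4_pow _

lemma Mf_ge_two (hη : 1 ≤ η) {j : ℕ} (hj : 1 ≤ j) : 2 ≤ Mf η j := by
  have h := Mf_ge η hη hj
  have : 2 ≤ 2^j := by
    calc 2 = 2^1 := rfl
    _ ≤ 2^j := Nat.pow_le_pow_right (by norm_num) hj
  omega

lemma Pb_ge (hη : 1 ≤ η) {j : ℕ} (hj : 1 ≤ j) : Mf η j + 1 ≤ Pb η j := by
  have h2 := Mf_ge_two η hη hj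
  have := nth_ge (Mf η j - 1)
  unfold Pb
  omega

lemma Pb_gt_pow (hη : 1 ≤ η) {j : ℕ} (hj : 1 ≤ j) : 2^j < Pb η j := by
  have := Mf_ge η hη hj
  have := Pb_ge η hη hj
  omega

/-- if `p` is a prime with `p_{j₀} ≤ p ≤ p_{M_j}` then `p` divides `P_j`. -/
lemma factor_mem (hη : 1 ≤ η) (hj₀ : 1 ≤ j₀) {p j : ℕ} (hp : p.Prime)
    (hlow : Nat.nth Nat.Prime (j₀ - 1) ≤ p) (hj : 1 ≤ j) (hup : p ≤ Pb η j) :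
    p ∣ Pf η j₀ j := by
  have hM2 := Mf_ge_two η hη hj
  have hk : Nat.nth Nat.Prime (Nat.count Nat.Prime p) = p := Nat.nth_count hp
  set k := Nat.count Nat.Prime p with hkdef
  have hk1 : j₀ - 1 ≤ k := by
    by_contra h
    push_neg at h
    have := (Nat.nth_lt_nth (p := Nat.Prime) Nat.infinite_setOf_prime).mpr h
    omega
  have hk2 : k ≤ Mf η j - 1 := by
    by_contra h
    push_neg at h
    have := (Nat.nth_lt_nth (p := Nat.Prime) Nat.infinite_setOf_prime).mpr h
    unfold Pb at hup
    omega
  have hmem : k + 1 ∈ Finset.Icc j₀ (Mf η j) := by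
    rw [Finset.mem_Icc]
    omega
  have hdvd := Finset.dvd_prod_of_mem (fun i => Nat.nth Nat.Prime (i - 1)) hmem
  rw [Pf_eq]
  simpa [hk] using hdvd

lemma Sf_gt (hη : 1 ≤ η) {j q : ℕ} (hj : 1 ≤ j) (hq : q ∈ Sf η m j₀ j) : j < q := by
  have h1 : Pb η j < q := (Finset.mem_filter.mp hq).2
  have h2 := Pb_gt_pow η hη hj
  have h3 : j < 2^j := Nat.lt_two_pow_self
  omega

/-- key per-level estimate. -/
lemma sum_Sf_le (hη : 1 ≤ η) (hm : 1 ≤ m) (hj₀ : 1 ≤ j₀) {j : ℕ} (hj : 1 ≤ j) :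
    ∑ q ∈ Sf η m j₀ j, (1:ℝ)/q ≤ 2*((m:ℝ)+1) / (j:ℝ)^η := by
  have hM2 := Mf_ge_two η hη hj
  have hPbge := Pb_ge η hη hj
  have hPb2 : 2 ≤ Pb η j := by omega
  have hPbR : (2:ℝ) ^ ((j:ℝ)^η) < (Pb η j : ℝ) := by
    calc (2:ℝ) ^ ((j:ℝ)^η) < (Mf η j : ℝ) + 1 := Mf_lt η j
      _ ≤ (Pb η j : ℝ) := by exact_mod_cast hPbge
  have hlogPb : ((j:ℝ)^η) * Real.log 2 ≤ Real.log (Pb η j) := by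
    calc ((j:ℝ)^η) * Real.log 2 = Real.log ((2:ℝ) ^ ((j:ℝ)^η)) := (Real.log_rpow two_pos _).symm
      _ ≤ Real.log (Pb η j) := Real.log_le_log (by positivity) hPbR.le
  set t := (Sf η m j₀ j).card with ht
  -- (Pb j)^t ≤ n j
  have hpow : (Pb η j)^t ≤ nf η m j₀ j := by
    have h1 : ∏ q ∈ Sf η m j₀ j, q ∣ nf η m j₀ j :=
      dvd_trans (Finset.prod_dvd_prod_of_subset _ _ _ (Finset.filter_subset _ _))
        (Nat.prod_primeFactors_dvd _)
    have h2 : (Pb η j)^t ≤ ∏ q ∈ Sf η m j₀ j, q :=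
      Finset.pow_card_le_prod _ _ _ (fun q hq => (le_of_lt (Finset.mem_filter.mp hq).2))
    exact h2.trans (Nat.le_of_dvd (nf_pos η m j₀ hm j) h1)
  -- n j ≤ 4 ^ (m + Pb j)
  have hn4 : nf η m j₀ j ≤ 4 ^ (m + Pb η j) := by
    have h1 : Pf η j₀ j ≤ 4 ^ (Pb η j) := by
      rw [Pf_eq]; exact prodIcc_le j₀ hj₀ (by omega)
    have h2 : m + 1 ≤ 4^m := by
      have := Nat.lt_two_pow_self (n := m)
      have h4 : 2^m ≤ 4^m := Nat.pow_le_pow_left (by norm_num) m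
      omega
    have h3 : 1 ≤ 4 ^ (Pb η j) := Nat.one_le_two_pow.trans (Nat.pow_le_pow_left (by norm_num) _)
    calc nf η m j₀ j = m + Pf η j₀ j := rfl
      _ ≤ m + 4 ^ (Pb η j) := by omega
      _ ≤ (m+1) * 4 ^ (Pb η j) := by nlinarith
      _ ≤ 4^m * 4 ^ (Pb η j) := Nat.mul_le_mul_right _ h2
      _ = 4 ^ (m + Pb η j) := (pow_add 4 m _).symm
  -- pass to real logarithms
  have hPbRpos : (0:ℝ) < (Pb η j : ℝ) := by positivity
  have hlog1 : (t:ℝ) * Real.log (Pb η j) ≤ ((m:ℝ) + Pb η j) * Real.log 4 := by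
    have hc : ((Pb η j : ℝ))^t ≤ (4:ℝ)^(m + Pb η j) := by
      exact_mod_cast hpow.trans hn4
    have := Real.log_le_log (by positivity) hc
    rwa [Real.log_pow, Real.log_pow, Nat.cast_add] at this
  have hlog4 : Real.log 4 = 2 * Real.log 2 := by
    rw [show (4:ℝ) = 2^2 by norm_num, Real.log_pow]
    push_cast; ring
  have hlog2 : (0:ℝ) < Real.log 2 := Real.log_pos (by norm_num)
  have hmPb : ((m:ℝ) + Pb η j) ≤ ((m:ℝ)+1) * Pb η j := by
    have h1 : (1:ℝ) ≤ (Pb η j : ℝ) := by exact_mod_cast (by omega : 1 ≤ Pb η j)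
    nlinarith [h1, (by exact_mod_cast Nat.zero_le m : (0:ℝ) ≤ (m:ℝ))]
  have hkey : ((t:ℝ) * ((j:ℝ)^η)) * Real.log 2 ≤ (2*((m:ℝ)+1) * (Pb η j)) * Real.log 2 := by
    calc ((t:ℝ) * ((j:ℝ)^η)) * Real.log 2 = (t:ℝ) * (((j:ℝ)^η) * Real.log 2) := by ring
      _ ≤ (t:ℝ) * Real.log (Pb η j) :=
          mul_le_mul_of_nonneg_left hlogPb (by positivity)
      _ ≤ ((m:ℝ) + Pb η j) * Real.log 4 := hlog1
      _ = ((m:ℝ) + Pb η j) * (2 * Real.log 2) := by rw [hlog4]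
      _ ≤ (((m:ℝ)+1) * Pb η j) * (2 * Real.log 2) :=
          mul_le_mul_of_nonneg_right hmPb (by positivity)
      _ = (2*((m:ℝ)+1) * (Pb η j)) * Real.log 2 := by ring
  have htPb : (t:ℝ) * ((j:ℝ)^η) ≤ 2*((m:ℝ)+1) * Pb η j :=
    le_of_mul_le_mul_right hkey hlog2
  have hjpos : (0:ℝ) < (j:ℝ)^η := Real.rpow_pos_of_pos (by exact_mod_cast hj) η
  have hsum : ∑ q ∈ Sf η m j₀ j, (1:ℝ)/q ≤ (t:ℝ) * (1/(Pb η j : ℝ)) := by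
    have := Finset.sum_le_card_nsmul (Sf η m j₀ j) (fun q => (1:ℝ)/q) (1/(Pb η j : ℝ))
      (fun q hq => by
        have hlt : Pb η j < q := (Finset.mem_filter.mp hq).2
        exact one_div_le_one_div_of_le hPbRpos (by exact_mod_cast hlt.le))
    simpa [nsmul_eq_mul] using this
  calc ∑ q ∈ Sf η m j₀ j, (1:ℝ)/q ≤ (t:ℝ) * (1/(Pb η j : ℝ)) := hsum
    _ = (t:ℝ) / (Pb η j : ℝ) := by rw [mul_one_div]
    _ ≤ 2*((m:ℝ)+1) / (j:ℝ)^η := by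
        rw [div_le_div_iff₀ hPbRpos hjpos]
        exact htPb

lemma lacunary_part (hη : 1 < η) (hm : 1 ≤ m) (hj₀ : 1 ≤ j₀) :
    Lacunary {r : ℝ | ∃ j : ℕ, 1 ≤ j ∧
        r = Real.sqrt ((m : ℝ) + (prodPrimesFrom j₀ ((2 : ℝ) ^ ((j : ℝ) ^ η)) : ℝ))} := by
  refine ⟨Real.sqrt (((m:ℝ)+2)/((m:ℝ)+1)), ?_, ?_⟩
  · have h1 : (1:ℝ) < ((m:ℝ)+2)/((m:ℝ)+1) := by
      rw [lt_div_iff₀ (by positivity)]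
      linarith
    calc (1:ℝ) = Real.sqrt 1 := Real.sqrt_one.symm
      _ < _ := Real.sqrt_lt_sqrt (by norm_num) h1
  · rintro r ⟨j, hj, rfl⟩ s ⟨j', hj', rfl⟩ hrs
    have hlt : Pf η j₀ j < Pf η j₀ j' := by
      by_contra h
      push_neg at h
      have h2 : ((m:ℝ) + (Pf η j₀ j' : ℝ)) ≤ ((m:ℝ) + (Pf η j₀ j : ℝ)) := by
        have : ((Pf η j₀ j' : ℝ)) ≤ (Pf η j₀ j : ℝ) := by exact_mod_cast h
        linarith
      exact absurd hrs (not_lt.mpr (Real.sqrt_le_sqrt h2))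
    have hdvd : Pf η j₀ j ∣ Pf η j₀ j' := by
      rcases le_total (Mf η j) (Mf η j') with h | h
      · exact Pf_dvd η j₀ h
      · have h1 := Pf_dvd η j₀ h
        have := Nat.le_of_dvd (Pf_pos η j₀ j) h1
        omega
    have h2P : 2 * Pf η j₀ j ≤ Pf η j₀ j' := by
      obtain ⟨d, hd⟩ := hdvd
      have hPpos := Pf_pos η j₀ j
      have hd2 : 2 ≤ d := by
        rcases Nat.lt_or_ge d 2 with h | h
        · interval_cases d <;> omega
        · exact h
      calc 2 * Pf η j₀ j = Pf η j₀ j * 2 := by ring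
        _ ≤ Pf η j₀ j * d := Nat.mul_le_mul_left _ hd2
        _ = Pf η j₀ j' := hd.symm
    have hP1 : (1:ℝ) ≤ (Pf η j₀ j : ℝ) := by exact_mod_cast Pf_pos η j₀ j
    have h2PR : 2 * (Pf η j₀ j : ℝ) ≤ (Pf η j₀ j' : ℝ) := by exact_mod_cast h2P
    have hm0 : (0:ℝ) ≤ (m:ℝ) := Nat.cast_nonneg m
    rw [← Real.sqrt_mul (by positivity)]
    apply Real.sqrt_le_sqrt
    show ((m:ℝ)+2)/((m:ℝ)+1) * ((m:ℝ) + (Pf η j₀ j : ℝ)) ≤ (m:ℝ) + (Pf η j₀ j' : ℝ)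
    have key : ((m:ℝ)+2)/((m:ℝ)+1) * ((m:ℝ) + (Pf η j₀ j : ℝ)) ≤ (m:ℝ) + 2*(Pf η j₀ j : ℝ) := by
      rw [div_mul_eq_mul_div, div_le_iff₀ (by positivity)]
      nlinarith
    linarith

lemma dichotomy (hη : 1 < η) (hm : 1 ≤ m) (hj₀ : 1 ≤ j₀) :
    ∃ G B : Set ℕ,
      (∀ p : ℕ, p.Prime → p ∈ G ∪ B) ∧
      (∀ p ∈ G, Nat.Prime p) ∧ (∀ p ∈ B, Nat.Prime p) ∧
      (∀ p ∈ G, ∀ j : ℕ, 1 ≤ j → IsUnit ((nf η m j₀ j : ZMod p))) ∧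
      (∀ ε : ℝ, 0 < ε → ∃ C : ℝ, 0 < C ∧ ∀ p ∈ G,
        (({z : ZMod p | ∃ j : ℕ, 1 ≤ j ∧ z = (nf η m j₀ j : ZMod p)}.ncard : ℝ))
          ≤ C * (p : ℝ) ^ ε) ∧
      Summable (fun q : B => 1 / (q : ℝ)) := by
  have hη1 : 1 ≤ η := hη.le
  set Q := Nat.nth Nat.Prime (j₀ - 1) with hQ
  refine ⟨{p | p.Prime ∧ ∀ j, 1 ≤ j → ¬ p ∣ nf η m j₀ j},
    {p | p.Prime ∧ (p ∣ m ∨ p < Q ∨ ∃ j, 1 ≤ j ∧ p ∈ Sf η m j₀ j)}, ?_, ?_, ?_, ?_, ?_, ?_⟩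
  · -- cover
    intro p hp
    by_cases hG : ∀ j, 1 ≤ j → ¬ p ∣ nf η m j₀ j
    · exact Or.inl ⟨hp, hG⟩
    · push_neg at hG
      obtain ⟨j, hj, hdvd⟩ := hG
      right
      refine ⟨hp, ?_⟩
      by_cases h1 : p ∣ m
      · exact Or.inl h1
      by_cases h2 : p < Q
      · exact Or.inr (Or.inl h2)
      push_neg at h2
      refine Or.inr (Or.inr ⟨j, hj, ?_⟩)
      rw [Sf, Finset.mem_filter, Nat.mem_primeFactors]
      refine ⟨⟨hp, hdvd, (nf_pos η m j₀ hm j).ne'⟩, ?_⟩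
      by_contra h3
      push_neg at h3
      have hPdvd := factor_mem η j₀ hη1 hj₀ hp h2 hj h3
      have hpm : p ∣ m := by
        have h4 := Nat.dvd_sub hdvd hPdvd
        simpa [nf, Nat.add_sub_cancel] using h4
      exact h1 hpm
  · exact fun p hp => hp.1
  · exact fun p hp => hp.1
  · -- units
    rintro p ⟨hp, hnd⟩ j hj
    rw [ZMod.isUnit_iff_coprime]
    exact ((hp.coprime_iff_not_dvd).mpr (hnd j hj)).symm
  · -- residue count
    intro ε hε
    have hl2 : (0:ℝ) < Real.log 2 := Real.log_pos (by norm_num)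
    have hC3 : (0:ℝ) < 1/(ε * Real.log 2) := one_div_pos.mpr (mul_pos hε hl2)
    have hQ0 : (0:ℝ) ≤ (Q:ℝ) := Nat.cast_nonneg Q
    refine ⟨(Q:ℝ) + 1 + 1/(ε * Real.log 2), by linarith, ?_⟩
    rintro p ⟨hp, _⟩
    haveI := Fact.mk hp
    set T := {z : ZMod p | ∃ j, 1 ≤ j ∧ z = (nf η m j₀ j : ZMod p)} with hT
    have hcard : T.ncard ≤ Q + 1 + Nat.log 2 p := by
      by_cases hcase : p < Q
      · have h1 : T.ncard ≤ (Set.univ : Set (ZMod p)).ncard :=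
          Set.ncard_le_ncard (Set.subset_univ T) Set.finite_univ
        rw [Set.ncard_univ, Nat.card_eq_fintype_card, ZMod.card] at h1
        omega
      · push_neg at hcase
        set L := Nat.log 2 p with hL
        have hsub : T ⊆ insert ((m:ZMod p))
            ((fun j => (nf η m j₀ j : ZMod p)) '' (Set.Icc 1 L)) := by
          rintro z ⟨j, hj, rfl⟩
          by_cases hjL : j ≤ L
          · exact Set.mem_insert_iff.mpr (Or.inr ⟨j, ⟨hj, hjL⟩, rfl⟩)
          · push_neg at hjL
            have hple : p ≤ Pb η j := by
              have h1 : p < 2 ^ (L+1) := Nat.lt_pow_succ_log_self (by norm_num) p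
              have h2 : 2^(L+1) ≤ 2^j := Nat.pow_le_pow_right (by norm_num) hjL
              have h3 := Pb_gt_pow η hη1 hj
              omega
            have hPdvd := factor_mem η j₀ hη1 hj₀ hp hcase hj hple
            have hz : ((Pf η j₀ j : ℕ) : ZMod p) = 0 :=
              (ZMod.natCast_eq_zero_iff _ _).mpr hPdvd
            have hmeq : ((nf η m j₀ j : ℕ) : ZMod p) = (m : ZMod p) := by
              show ((m + Pf η j₀ j : ℕ) : ZMod p) = _
              rw [Nat.cast_add, hz, add_zero]
            rw [hmeq]
            exact Set.mem_insert _ _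
        have hIccfin : (Set.Icc 1 L).Finite := Set.finite_Icc 1 L
        have hIcc : (Set.Icc (1:ℕ) L).ncard = L := by
          rw [← Finset.coe_Icc, Set.ncard_coe_finset, Nat.card_Icc]
          omega
        have himg := Set.ncard_image_le (f := fun j => (nf η m j₀ j : ZMod p)) hIccfin
        calc T.ncard ≤ _ := Set.ncard_le_ncard hsub ((hIccfin.image _).insert _)
          _ ≤ ((fun j => (nf η m j₀ j : ZMod p)) '' (Set.Icc 1 L)).ncard + 1 :=
              Set.ncard_insert_le _ _
          _ ≤ Q + 1 + L := by omega
    -- real arithmetic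
    have hp1 : (1:ℝ) ≤ (p:ℝ) := by exact_mod_cast hp.one_lt.le
    have hpε : (1:ℝ) ≤ (p:ℝ)^ε := by
      calc (1:ℝ) = (1:ℝ)^ε := (Real.one_rpow ε).symm
        _ ≤ (p:ℝ)^ε := Real.rpow_le_rpow zero_le_one hp1 hε.le
    have hlog : (Nat.log 2 p : ℝ) ≤ (p:ℝ)^ε * (1/(ε * Real.log 2)) := by
      have h1 : (Nat.log 2 p : ℝ) ≤ Real.logb 2 p := Real.natLog_le_logb p 2
      have h3 : Real.log p ≤ (p:ℝ)^ε / ε := Real.log_le_rpow_div (by positivity) hε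
      have h4 : Real.logb 2 p = Real.log p / Real.log 2 := rfl
      calc (Nat.log 2 p:ℝ) ≤ Real.log p / Real.log 2 := h4 ▸ h1
        _ ≤ ((p:ℝ)^ε / ε) / Real.log 2 := by
            gcongr
        _ = (p:ℝ)^ε * (1/(ε * Real.log 2)) := by
            field_simp
    calc (T.ncard : ℝ) ≤ (Q:ℝ) + 1 + (Nat.log 2 p : ℝ) := by exact_mod_cast hcard
      _ ≤ ((Q:ℝ) + 1) * (p:ℝ)^ε + (p:ℝ)^ε * (1/(ε*Real.log 2)) := by
          have h5 : (Q:ℝ)+1 ≤ ((Q:ℝ)+1) * (p:ℝ)^ε := le_mul_of_one_le_right (by linarith) hpε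
          linarith
      _ = ((Q:ℝ) + 1 + 1/(ε*Real.log 2)) * (p:ℝ)^ε := by ring
  · -- summability
    have hsum_pow : Summable (fun j : ℕ => (j:ℝ) ^ (-η)) :=
      Real.summable_nat_rpow.mpr (by linarith)
    set K1 := ∑' j : ℕ, (j:ℝ)^(-η) with hK1
    classical
    set B0 : Finset ℕ := m.primeFactors ∪ Finset.filter Nat.Prime (Finset.range Q) with hB0
    set K0 := ∑ q ∈ B0, (1:ℝ)/q with hK0
    set Bs : Set ℕ := {p | p.Prime ∧ (p ∣ m ∨ p < Q ∨ ∃ j, 1 ≤ j ∧ p ∈ Sf η m j₀ j)} with hBs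
    have hind : Summable (Set.indicator Bs (fun q => 1/(q:ℝ))) := by
      apply summable_of_sum_range_le (c := K0 + 2*((m:ℝ)+1)*K1)
        (fun n => Set.indicator_nonneg (fun q _ => by positivity) n)
      intro N
      have hpoint : ∀ q ∈ Finset.range N,
          Set.indicator Bs (fun q => 1/(q:ℝ)) q ≤
          (if q ∈ B0 then 1/(q:ℝ) else 0)
            + ∑ j ∈ Finset.Icc 1 N, (if q ∈ Sf η m j₀ j then 1/(q:ℝ) else 0) := by
        intro q hqN
        have hnn1 : (0:ℝ) ≤ if q ∈ B0 then 1/(q:ℝ) else 0 := by positivity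
        have hnn2 : ∀ j ∈ Finset.Icc 1 N, (0:ℝ) ≤ (if q ∈ Sf η m j₀ j then 1/(q:ℝ) else 0) :=
          fun j _ => by positivity
        have hnn2' := Finset.sum_nonneg hnn2
        by_cases hqB : q ∈ Bs
        · rw [Set.indicator_of_mem hqB]
          obtain ⟨hp, hcase⟩ := hqB
          rcases hcase with h | h | ⟨j, hj, hS⟩
          · have hqB0 : q ∈ B0 :=
              Finset.mem_union_left _ (Nat.mem_primeFactors.mpr ⟨hp, h, by omega⟩)
            rw [if_pos hqB0]
            linarith
          · have hqB0 : q ∈ B0 :=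
              Finset.mem_union_right _ (Finset.mem_filter.mpr ⟨Finset.mem_range.mpr h, hp⟩)
            rw [if_pos hqB0]
            linarith
          · have hjq : j < q := Sf_gt η m j₀ hη1 hj hS
            have hqN' : q < N := Finset.mem_range.mp hqN
            have hjmem : j ∈ Finset.Icc 1 N := Finset.mem_Icc.mpr ⟨hj, by omega⟩
            have hle : 1/(q:ℝ) ≤ ∑ j ∈ Finset.Icc 1 N,
                (if q ∈ Sf η m j₀ j then 1/(q:ℝ) else 0) := by
              have h6 := Finset.single_le_sum hnn2 hjmem
              rwa [if_pos hS] at h6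
            linarith
        · rw [Set.indicator_of_notMem hqB]
          linarith
      calc ∑ q ∈ Finset.range N, Set.indicator Bs (fun q => 1/(q:ℝ)) q
          ≤ ∑ q ∈ Finset.range N, ((if q ∈ B0 then 1/(q:ℝ) else 0)
              + ∑ j ∈ Finset.Icc 1 N, (if q ∈ Sf η m j₀ j then 1/(q:ℝ) else 0)) :=
            Finset.sum_le_sum hpoint
        _ = (∑ q ∈ Finset.range N, if q ∈ B0 then 1/(q:ℝ) else 0)
              + ∑ j ∈ Finset.Icc 1 N, ∑ q ∈ Finset.range N,
                  (if q ∈ Sf η m j₀ j then 1/(q:ℝ) else 0) := by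
            rw [Finset.sum_add_distrib, Finset.sum_comm]
        _ ≤ K0 + 2*((m:ℝ)+1)*K1 := by
            apply add_le_add
            · rw [← Finset.sum_filter]
              apply Finset.sum_le_sum_of_subset_of_nonneg
              · intro x hx
                exact (Finset.mem_filter.mp hx).2
              · intro i _ _
                positivity
            · calc ∑ j ∈ Finset.Icc 1 N, ∑ q ∈ Finset.range N,
                    (if q ∈ Sf η m j₀ j then 1/(q:ℝ) else 0)
                  ≤ ∑ j ∈ Finset.Icc 1 N, 2*((m:ℝ)+1) * (j:ℝ)^(-η) := by
                    apply Finset.sum_le_sum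
                    intro j hj
                    have hj1 : 1 ≤ j := (Finset.mem_Icc.mp hj).1
                    have hjR : (0:ℝ) < (j:ℝ) := by exact_mod_cast hj1
                    have step1 : ∑ q ∈ Finset.range N,
                        (if q ∈ Sf η m j₀ j then 1/(q:ℝ) else 0)
                        ≤ ∑ q ∈ Sf η m j₀ j, (1:ℝ)/q := by
                      rw [← Finset.sum_filter]
                      apply Finset.sum_le_sum_of_subset_of_nonneg
                      · intro x hx
                        exact (Finset.mem_filter.mp hx).2
                      · intro i _ _
                        positivity
                    have step2 := sum_Sf_le η m j₀ hη1 hm hj₀ hj1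
                    have step3 : 2*((m:ℝ)+1) / (j:ℝ)^η = 2*((m:ℝ)+1) * (j:ℝ)^(-η) := by
                      rw [Real.rpow_neg hjR.le, div_eq_mul_inv]
                    linarith
                _ = 2*((m:ℝ)+1) * ∑ j ∈ Finset.Icc 1 N, (j:ℝ)^(-η) := by
                    rw [Finset.mul_sum]
                _ ≤ 2*((m:ℝ)+1)*K1 := by
                    apply mul_le_mul_of_nonneg_left _ (by positivity)
                    exact sum_le_hasSum (Finset.Icc 1 N)
                      (fun i _ => Real.rpow_nonneg (Nat.cast_nonneg i) _) hsum_pow.hasSum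
    exact summable_subtype_iff_indicator.mpr hind

end St3

theorem statement3 (η : ℝ) (hη : 1 < η) (m j₀ : ℕ) (hm : 1 ≤ m) (hj₀ : 1 ≤ j₀) :
    Lacunary {r : ℝ | ∃ j : ℕ, 1 ≤ j ∧
        r = Real.sqrt ((m : ℝ) + (prodPrimesFrom j₀ ((2 : ℝ) ^ ((j : ℝ) ^ η)) : ℝ))} ∧
    ∃ G B : Set ℕ,
      (∀ p : ℕ, p.Prime → p ∈ G ∪ B) ∧
      (∀ p ∈ G, Nat.Prime p) ∧ (∀ p ∈ B, Nat.Prime p) ∧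
      (∀ p ∈ G, ∀ j : ℕ, 1 ≤ j →
        IsUnit (((m + prodPrimesFrom j₀ ((2 : ℝ) ^ ((j : ℝ) ^ η)) : ℕ) : ZMod p))) ∧
      (∀ ε : ℝ, 0 < ε → ∃ C : ℝ, 0 < C ∧ ∀ p ∈ G,
        (({z : ZMod p | ∃ j : ℕ, 1 ≤ j ∧
            z = ((m + prodPrimesFrom j₀ ((2 : ℝ) ^ ((j : ℝ) ^ η)) : ℕ) : ZMod p)}.ncard : ℝ))
          ≤ C * (p : ℝ) ^ ε) ∧
      Summable (fun q : B => 1 / (q : ℝ)) := by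
  constructor
  · exact St3.lacunary_part η m j₀ hη hm hj₀
  · obtain ⟨G, B, h1, h2, h3, h4, h5, h6⟩ := St3.dichotomy η m j₀ hη hm hj₀
    exact ⟨G, B, h1, h2, h3, h4, h5, h6⟩

end
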